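/- arXiv:2306.01619 — 7 statements merged into one kernel-verified Lean document; each statement's English description precedes it below -/
import Mathlib

section
/- For a Rose Window graph Γ = R_n(a,r), the following are equivalent: (i) Γ is bipartite; (ii) the canonical double cover Γ × K_2 is disconnected; (iii) n and a are even and r is odd. -/
open SimpleGraph

/-- The Rose Window graph `R_n(a,r)`. Vertices `Sum.inl i = uᵢ`, `Sum.inr i = vᵢ`. -/
def roseWindow (n : ℕ) (a r : ZMod n) : SimpleGraph (ZMod n ⊕ ZMod n) :=
  SimpleGraph.fromRel (fun x y =>
    match x, y with
    | Sum.inl i, Sum.inl i' => i' = i + 1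
    | Sum.inr i, Sum.inr i' => i' = i + r
    | Sum.inl i', Sum.inr i => i' = i ∨ i' = i + a
    | _, _ => False)

/-- The canonical double cover of a graph. -/
def cdc {V : Type*} (G : SimpleGraph V) : SimpleGraph (V × ZMod 2) where
  Adj x y := G.Adj x.1 y.1 ∧ x.2 ≠ y.2
  symm := ⟨fun x y h => ⟨h.1.symm, h.2.symm⟩⟩
  loopless := ⟨fun x h => h.2 rfl⟩

/-- The automorphism group of a graph, as a subgroup of the permutations of vertices. -/
def autSubgroup {V : Type*} (G : SimpleGraph V) : Subgroup (Equiv.Perm V) where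
  carrier := {σ | ∀ x y, G.Adj (σ x) (σ y) ↔ G.Adj x y}
  one_mem' := by intro x y; rfl
  mul_mem' := by
    intro σ τ hσ hτ x y
    simpa [Equiv.Perm.mul_apply] using (hσ (τ x) (τ y)).trans (hτ x y)
  inv_mem' := by
    intro σ hσ x y
    conv_rhs => rw [← (σ.apply_symm_apply x), ← (σ.apply_symm_apply y)]
    exact (hσ (σ⁻¹ x) (σ⁻¹ y)).symm

lemma rw_adj_uu {n : ℕ} (hn : 3 ≤ n) (a r : ZMod n) (i : ZMod n) :
    (roseWindow n a r).Adj (Sum.inl i) (Sum.inl (i+1)) := by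
  haveI : Fact (1 < n) := ⟨by omega⟩
  rw [roseWindow, SimpleGraph.fromRel_adj]
  refine ⟨?_, Or.inl rfl⟩
  simp only [ne_eq, Sum.inl.injEq]
  intro h
  exact one_ne_zero (left_eq_add.mp h)

lemma rw_adj_uv {n : ℕ} (a r : ZMod n) (i : ZMod n) :
    (roseWindow n a r).Adj (Sum.inl i) (Sum.inr i) := by
  rw [roseWindow, SimpleGraph.fromRel_adj]
  exact ⟨Sum.inl_ne_inr, Or.inl (Or.inl rfl)⟩

lemma rw_adj_uv' {n : ℕ} (a r : ZMod n) (i : ZMod n) :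
    (roseWindow n a r).Adj (Sum.inl (i+a)) (Sum.inr i) := by
  rw [roseWindow, SimpleGraph.fromRel_adj]
  exact ⟨Sum.inl_ne_inr, Or.inl (Or.inr rfl)⟩

lemma rw_adj_vv {n : ℕ} (a : ZMod n) {r : ZMod n} (hr : r ≠ 0) (i : ZMod n) :
    (roseWindow n a r).Adj (Sum.inr i) (Sum.inr (i+r)) := by
  rw [roseWindow, SimpleGraph.fromRel_adj]
  refine ⟨?_, Or.inl rfl⟩
  simp only [ne_eq, Sum.inr.injEq]
  intro h
  exact hr (left_eq_add.mp h)

/-- A walk along the rim of length `k` from `u_j` to `u_{j+k}`. -/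
lemma rw_walkChain {n : ℕ} (hn : 3 ≤ n) (a r : ZMod n) :
    ∀ (k : ℕ) (j j' : ZMod n), j' = j + (k : ZMod n) →
      ∃ p : (roseWindow n a r).Walk (Sum.inl j) (Sum.inl j'), p.length = k := by
  intro k
  induction k with
  | zero =>
    intro j j' hj
    rw [Nat.cast_zero, add_zero] at hj
    subst hj
    exact ⟨Walk.nil, rfl⟩
  | succ k ih =>
    intro j j' hj
    obtain ⟨p, hp⟩ := ih j (j + (k : ZMod n)) rfl
    refine ⟨(p.concat (rw_adj_uu hn a r _)).copy rfl (congrArg Sum.inl ?_), by simp [hp]⟩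
    rw [hj]
    push_cast
    ring

lemma zmod2_ne_add_one (s : ZMod 2) : s ≠ s + 1 := by revert s; decide
lemma zmod2_succ_of_ne {s t : ZMod 2} (h : s ≠ t) : t = s + 1 := by revert s t; decide
lemma even_cast_zmod2 {m : ℕ} (h : Even m) : (m : ZMod 2) = 0 := by
  rw [ZMod.natCast_eq_zero_iff]; exact h.two_dvd
lemma odd_cast_zmod2 {m : ℕ} (h : Odd m) : (m : ZMod 2) = 1 := by
  obtain ⟨k, hk⟩ := h; subst hk; push_cast
  rw [show ((2:ZMod 2)) = 0 by decide]; ring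
lemma even_of_cast_zmod2 {m : ℕ} (h : (m : ZMod 2) = 0) : Even m := by
  rw [ZMod.natCast_eq_zero_iff] at h; rw [Nat.even_iff]; omega
lemma odd_of_cast_zmod2 {m : ℕ} (h : (m : ZMod 2) = 1) : Odd m := by
  rcases Nat.even_or_odd m with he | ho
  · rw [even_cast_zmod2 he] at h; exact absurd h (by decide)
  · exact ho

lemma cdc_reach {V : Type*} {G : SimpleGraph V} {x y : V} (p : G.Walk x y) (s : ZMod 2) :
    (cdc G).Reachable (x, s) (y, s + p.length) := by
  induction p generalizing s with
  | nil => simpa using Reachable.refl _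
  | @cons u v w h q ih =>
    have e1 : (cdc G).Adj (u, s) (v, s + 1) := ⟨h, zmod2_ne_add_one s⟩
    have h2 : s + (((Walk.cons h q).length : ℕ) : ZMod 2) = (s + 1) + q.length := by
      rw [Walk.length_cons]; push_cast; ring
    rw [h2]
    exact e1.reachable.trans (ih (s + 1))

/-- An odd closed walk at `u_0` when it is not the case that n, a are even and r odd. -/
lemma rw_oddClosed {n a r : ℕ} (hn : 3 ≤ n) (han : a < n) (hrn : r < n)
    (hr : (r : ZMod n) ≠ 0) (hR : ¬ (Even n ∧ Even a ∧ Odd r)) :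
    ∃ w : (roseWindow n (a : ZMod n) (r : ZMod n)).Walk (Sum.inl 0) (Sum.inl 0),
      Odd w.length := by
  rcases Nat.even_or_odd n with hne | hno
  · rcases Nat.even_or_odd a with hae | hao
    · -- n even, a even, so r must be even
      have hre : Even r := by
        rcases Nat.even_or_odd r with h | h
        · exact h
        · exact absurd ⟨hne, hae, h⟩ hR
      have e1 := rw_adj_uv (n := n) (a : ZMod n) (r : ZMod n) 0
      have e2 := rw_adj_vv (n := n) (a : ZMod n) hr 0
      have e3 := (rw_adj_uv (n := n) (a : ZMod n) (r : ZMod n) (0 + (r : ZMod n))).symm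
      obtain ⟨p, hp⟩ := rw_walkChain hn (a : ZMod n) (r : ZMod n) (n - r)
        (0 + (r : ZMod n)) 0 (by
          rw [add_assoc, ← Nat.cast_add, show r + (n - r) = n by omega, ZMod.natCast_self,
            add_zero])
      refine ⟨Walk.cons e1 (Walk.cons e2 (Walk.cons e3 p)), ?_⟩
      simp only [Walk.length_cons, hp]
      rw [Nat.odd_iff] at *
      rw [Nat.even_iff] at hne hre
      omega
    · -- n even, a odd
      have e1 := rw_adj_uv (n := n) (a : ZMod n) (r : ZMod n) 0
      have e2 := (rw_adj_uv' (n := n) (a : ZMod n) (r : ZMod n) 0).symm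
      obtain ⟨p, hp⟩ := rw_walkChain hn (a : ZMod n) (r : ZMod n) (n - a)
        (0 + (a : ZMod n)) 0 (by
          rw [add_assoc, ← Nat.cast_add, show a + (n - a) = n by omega, ZMod.natCast_self,
            add_zero])
      refine ⟨Walk.cons e1 (Walk.cons e2 p), ?_⟩
      simp only [Walk.length_cons, hp]
      rw [Nat.odd_iff] at *
      rw [Nat.even_iff] at hne
      omega
  · -- n odd
    obtain ⟨p, hp⟩ := rw_walkChain hn (a : ZMod n) (r : ZMod n) n 0 0
      (by rw [ZMod.natCast_self, add_zero])
    exact ⟨p, by rw [hp]; exact hno⟩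

/-- Every vertex is reachable from `u_0` by a walk. -/
lemma rw_vertexWalk {n : ℕ} (hn : 3 ≤ n) (a r : ZMod n) (x : ZMod n ⊕ ZMod n) :
    Nonempty ((roseWindow n a r).Walk (Sum.inl 0) x) := by
  haveI : NeZero n := ⟨by omega⟩
  rcases x with i | i
  · obtain ⟨p, _⟩ := rw_walkChain hn a r i.val 0 i
      (by rw [zero_add, ZMod.natCast_rightInverse i])
    exact ⟨p⟩
  · obtain ⟨p, _⟩ := rw_walkChain hn a r i.val 0 i
      (by rw [zero_add, ZMod.natCast_rightInverse i])
    exact ⟨p.concat (rw_adj_uv a r i)⟩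

lemma rw_cdc_connected {n a r : ℕ} (hn : 3 ≤ n) (han : a < n) (hrn : r < n)
    (hr : (r : ZMod n) ≠ 0) (hR : ¬ (Even n ∧ Even a ∧ Odd r)) :
    (cdc (roseWindow n (a : ZMod n) (r : ZMod n))).Connected := by
  set G := roseWindow n (a : ZMod n) (r : ZMod n) with hG
  obtain ⟨w, hw⟩ := rw_oddClosed hn han hrn hr hR
  have flip : ∀ s t : ZMod 2, (cdc G).Reachable (Sum.inl 0, s) (Sum.inl 0, t) := by
    intro s t
    rcases eq_or_ne s t with h | h
    · rw [h]
    · have := cdc_reach w s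
      rw [odd_cast_zmod2 hw, ← zmod2_succ_of_ne h] at this
      exact this
  have base : ∀ (x : ZMod n ⊕ ZMod n) (s : ZMod 2),
      (cdc G).Reachable (Sum.inl 0, 0) (x, s) := by
    intro x s
    obtain ⟨p⟩ := rw_vertexWalk hn (a : ZMod n) (r : ZMod n) x
    have h1 := cdc_reach p (s - p.length)
    rw [show s - (p.length : ZMod 2) + p.length = s by ring] at h1
    exact (flip 0 (s - p.length)).trans h1
  constructor
  · rintro ⟨x, s⟩ ⟨y, t⟩
    exact (base x s).symm.trans (base y t)

/-- If n, a even and r odd, the rose window graph is 2-colorable. -/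
lemma rw_colorable {n a r : ℕ} (hne : Even n) (hae : Even a) (hro : Odd r) :
    (roseWindow n (a : ZMod n) (r : ZMod n)).Colorable 2 := by
  have hdvd : (2 : ℕ) ∣ n := hne.two_dvd
  let φ : ZMod n →+* ZMod 2 := ZMod.castHom hdvd (ZMod 2)
  have hA : φ ((a : ZMod n)) = 0 := by
    rw [map_natCast]; exact even_cast_zmod2 hae
  have hRr : φ ((r : ZMod n)) = 1 := by
    rw [map_natCast]; exact odd_cast_zmod2 hro
  have h10 : (1 : ZMod 2) ≠ 0 := by decide
  let c : ZMod n ⊕ ZMod n → ZMod 2 := Sum.elim (fun i => φ i) (fun i => φ i + 1)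
  have C : (roseWindow n (a : ZMod n) (r : ZMod n)).Coloring (ZMod 2) := by
    refine SimpleGraph.Coloring.mk c ?_
    intro v w hadj
    rw [roseWindow, SimpleGraph.fromRel_adj] at hadj
    obtain ⟨hne', hrel⟩ := hadj
    rcases v with i | i <;> rcases w with j | j
    · rcases hrel with h | h
      · subst h; simp only [c, Sum.elim_inl, map_add, map_one]
        intro hc; exact h10 (left_eq_add.mp hc)
      · subst h; simp only [c, Sum.elim_inl, map_add, map_one]
        intro hc; exact h10 (left_eq_add.mp hc.symm)
    · rcases hrel with (h | h) | h
      · subst h; simp only [c, Sum.elim_inl, Sum.elim_inr]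
        intro hc; exact h10 (left_eq_add.mp hc)
      · subst h; simp only [c, Sum.elim_inl, Sum.elim_inr, map_add, hA, add_zero]
        intro hc; exact h10 (left_eq_add.mp hc)
      · exact absurd h (by exact id)
    · rcases hrel with h | (h | h)
      · exact absurd h (by exact id)
      · subst h; simp only [c, Sum.elim_inl, Sum.elim_inr]
        intro hc; exact h10 (left_eq_add.mp hc.symm)
      · subst h; simp only [c, Sum.elim_inl, Sum.elim_inr, map_add, hA, add_zero]
        intro hc; exact h10 (left_eq_add.mp hc.symm)
    · rcases hrel with h | h
      · subst h
        simp only [c, Sum.elim_inr, map_add, hRr]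
        intro hc
        have := add_right_cancel hc
        exact h10 (left_eq_add.mp this)
      · subst h
        simp only [c, Sum.elim_inr, map_add, hRr]
        intro hc
        have := add_right_cancel hc
        exact h10 (left_eq_add.mp this.symm)
  have := C.colorable
  simpa using this

section fromColoring
variable {n a r : ℕ}

/-- From a 2-coloring, get a `ZMod 2`-valued proper coloring function. -/
lemma rw_key (hn : 3 ≤ n) (C : (roseWindow n (a : ZMod n) (r : ZMod n)).Coloring (Fin 2)) :
    ∃ c : ZMod n ⊕ ZMod n → ZMod 2,
      ∀ x y, (roseWindow n (a : ZMod n) (r : ZMod n)).Adj x y → c y = c x + 1 := by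
  refine ⟨fun v => ((C v).val : ZMod 2), ?_⟩
  intro x y h
  have hv : (C x).val ≠ (C y).val := fun he => C.valid h (Fin.val_injective he)
  have hx := (C x).isLt
  have hy := (C y).isLt
  set p := (C x).val with hp
  set q := (C y).val with hq
  interval_cases p <;> interval_cases q <;>
    first
      | omega
      | (show ((C y).val : ZMod 2) = ((C x).val : ZMod 2) + 1; rw [← hp, ← hq]; decide)
end fromColoring

lemma rw_conditions {n a r : ℕ} (hn : 3 ≤ n) (han : a < n) (hrn : r < n)
    (hr : (r : ZMod n) ≠ 0)
    (hP : (roseWindow n (a : ZMod n) (r : ZMod n)).Colorable 2) :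
    Even n ∧ Even a ∧ Odd r := by
  obtain ⟨C⟩ := hP
  obtain ⟨c, key⟩ := rw_key hn C
  -- the chain along the outer cycle
  have chain : ∀ k : ℕ, c (Sum.inl ((k : ZMod n))) = c (Sum.inl 0) + (k : ZMod 2) := by
    intro k
    induction k with
    | zero => simp
    | succ k ih =>
      have h1 := key _ _ (rw_adj_uu hn (a : ZMod n) (r : ZMod n) (k : ZMod n))
      rw [ih] at h1
      rw [show (((k+1 : ℕ)) : ZMod n) = (k : ZMod n) + 1 by push_cast; ring, h1]
      push_cast
      ring
  have hc1 : c (Sum.inr 0) = c (Sum.inl 0) + 1 :=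
    key _ _ (rw_adj_uv (a : ZMod n) (r : ZMod n) 0)
  have hc2 : c (Sum.inr 0) = c (Sum.inl ((a : ZMod n))) + 1 := by
    have := key _ _ (rw_adj_uv' (a : ZMod n) (r : ZMod n) 0)
    rwa [zero_add] at this
  have hc3 : c (Sum.inr ((r : ZMod n))) = c (Sum.inr 0) + 1 := by
    have := key _ _ (rw_adj_vv (a : ZMod n) hr 0)
    rwa [zero_add] at this
  have hc4 : c (Sum.inr ((r : ZMod n))) = c (Sum.inl ((r : ZMod n))) + 1 :=
    key _ _ (rw_adj_uv (a : ZMod n) (r : ZMod n) ((r : ZMod n)))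
  have hchn := chain n
  rw [ZMod.natCast_self] at hchn
  have hna : (n : ZMod 2) = 0 := (left_eq_add.mp hchn)
  have hca := chain a
  have haa : (a : ZMod 2) = 0 := by
    have : c (Sum.inl ((a : ZMod n))) = c (Sum.inl 0) := add_right_cancel (hc2.symm.trans hc1)
    rw [hca] at this
    exact (left_eq_add.mp this.symm)
  have hcr := chain r
  have hrr : (r : ZMod 2) = 1 := by
    have h5 : c (Sum.inl 0) + (r : ZMod 2) + 1 = c (Sum.inl 0) + 1 + 1 := by
      rw [← hcr, ← hc4, hc3, hc1]
    exact add_left_cancel (add_right_cancel h5)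
  exact ⟨even_of_cast_zmod2 hna, even_of_cast_zmod2 haa, odd_of_cast_zmod2 hrr⟩

lemma rw_cdc_disconnected {n a r : ℕ} (hn : 3 ≤ n)
    (hP : (roseWindow n (a : ZMod n) (r : ZMod n)).Colorable 2) :
    ¬ (cdc (roseWindow n (a : ZMod n) (r : ZMod n))).Connected := by
  obtain ⟨C⟩ := hP
  obtain ⟨c, key⟩ := rw_key hn C
  set G := roseWindow n (a : ZMod n) (r : ZMod n) with hG
  intro hQ
  let f : (ZMod n ⊕ ZMod n) × ZMod 2 → ZMod 2 := fun p => c p.1 + p.2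
  have hf : ∀ A B, (cdc G).Adj A B → f A = f B := by
    rintro ⟨x, s⟩ ⟨y, t⟩ ⟨hadj, hst⟩
    have h1 := key x y hadj
    have h2 := zmod2_succ_of_ne hst
    simp only [f]
    dsimp only at h2 ⊢
    rw [h1, h2]
    have : ∀ u w : ZMod 2, u + w = (u + 1) + (w + 1) := by decide
    exact this _ _
  have hfwalk : ∀ {A B}, (cdc G).Walk A B → f A = f B := by
    intro A B p
    induction p with
    | nil => rfl
    | cons h q ih => exact (hf _ _ h).trans ih
  obtain ⟨w⟩ := hQ.preconnected (Sum.inl 0, (0 : ZMod 2)) (Sum.inl 0, (1 : ZMod 2))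
  have := hfwalk w
  simp only [f] at this
  have h01 := add_left_cancel this
  exact (by decide : (0 : ZMod 2) ≠ 1) h01

/-- `R_n(a,r)` is bipartite iff its canonical double cover is disconnected
iff `n, a` are even and `r` is odd. -/
theorem roseWindow_bipartite_iff (n a r : ℕ) (hn : 3 ≤ n) (han : a < n) (hrn : r < n)
    (ha : (a : ZMod n) ≠ 0) (hr : (r : ZMod n) ≠ 0) :
    ((roseWindow n a r).Colorable 2 ↔ ¬ (cdc (roseWindow n a r)).Connected) ∧
    ((roseWindow n a r).Colorable 2 ↔ (Even n ∧ Even a ∧ Odd r)) := by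
  have hPR : (roseWindow n a r).Colorable 2 ↔ (Even n ∧ Even a ∧ Odd r) := by
    constructor
    · intro hP
      exact rw_conditions hn han hrn hr hP
    · rintro ⟨h1, h2, h3⟩
      exact rw_colorable h1 h2 h3
  refine ⟨⟨fun hP => rw_cdc_disconnected hn hP, fun hnQ => ?_⟩, hPR⟩
  by_contra hnP
  exact hnQ (rw_cdc_connected hn han hrn hr (fun hR => hnP (hPR.mpr hR)))
end

section
/- Let Γ = R_n(a,r). In the canonical double cover CDC(Γ), the subgraph induced by the spoke edges {u_{i,j},v_{i,j+1}} and {u_{i+a,j},v_{i,j+1}} is a disjoint union of cycles, each of length 2n/gcd(a,n). -/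
open SimpleGraph

/-- The subgraph of `CDC(R_n(a,r))` spanned by the spoke edges
`{u_{i,j}, v_{i,j+1}}` and `{u_{i+a,j}, v_{i,j+1}}`. -/
def spokeGraph (n : ℕ) (a : ZMod n) : SimpleGraph ((ZMod n ⊕ ZMod n) × ZMod 2) :=
  SimpleGraph.fromRel (fun x y =>
    ∃ (i : ZMod n) (j : ZMod 2),
      (x = (Sum.inl i, j) ∧ y = (Sum.inr i, j + 1)) ∨
      (x = (Sum.inl (i + a), j) ∧ y = (Sum.inr i, j + 1)))

lemma zmod2_add_one_add_one : ∀ j : ZMod 2, j + 1 + 1 = j := by decide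

lemma spoke_adj_inl {n : ℕ} {a i : ZMod n} {j : ZMod 2}
    {z : (ZMod n ⊕ ZMod n) × ZMod 2} :
    (spokeGraph n a).Adj (Sum.inl i, j) z ↔
      z = (Sum.inr i, j + 1) ∨ z = (Sum.inr (i - a), j + 1) := by
  rw [spokeGraph, fromRel_adj]
  constructor
  · rintro ⟨hne, h | h⟩
    · obtain ⟨i', j', h⟩ := h
      rcases h with ⟨h1, rfl⟩ | ⟨h1, rfl⟩
      · simp only [Prod.mk.injEq, Sum.inl.injEq] at h1
        obtain ⟨rfl, rfl⟩ := h1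
        exact Or.inl rfl
      · simp only [Prod.mk.injEq, Sum.inl.injEq] at h1
        obtain ⟨h1, rfl⟩ := h1
        right
        have : i' = i - a := by rw [h1]; ring
        rw [this]
    · simp at h
  · rintro (rfl | rfl)
    · exact ⟨by simp, Or.inl ⟨i, j, Or.inl ⟨rfl, rfl⟩⟩⟩
    · exact ⟨by simp, Or.inl ⟨i - a, j, Or.inr ⟨by rw [sub_add_cancel], rfl⟩⟩⟩

lemma spoke_adj_inr {n : ℕ} {a i : ZMod n} {j : ZMod 2}
    {z : (ZMod n ⊕ ZMod n) × ZMod 2} :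
    (spokeGraph n a).Adj (Sum.inr i, j) z ↔
      z = (Sum.inl i, j + 1) ∨ z = (Sum.inl (i + a), j + 1) := by
  rw [spokeGraph, fromRel_adj]
  constructor
  · rintro ⟨hne, h | h⟩
    · simp at h
    · obtain ⟨i', j', h⟩ := h
      rcases h with ⟨rfl, h2⟩ | ⟨rfl, h2⟩
      · simp only [Prod.mk.injEq, Sum.inr.injEq] at h2
        obtain ⟨rfl, rfl⟩ := h2
        exact Or.inl (by rw [zmod2_add_one_add_one])
      · simp only [Prod.mk.injEq, Sum.inr.injEq] at h2
        obtain ⟨rfl, rfl⟩ := h2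
        exact Or.inr (by rw [zmod2_add_one_add_one])
  · rintro (rfl | rfl)
    · exact ⟨by simp, Or.inr ⟨i, j + 1, Or.inl ⟨rfl, by rw [zmod2_add_one_add_one]⟩⟩⟩
    · exact ⟨by simp, Or.inr ⟨i, j + 1, Or.inr ⟨rfl, by rw [zmod2_add_one_add_one]⟩⟩⟩

/-- The walk around a spoke cycle. -/
def spokePath (n a : ℕ) (i : ZMod n) (j : ZMod 2) (k : ℕ) : (ZMod n ⊕ ZMod n) × ZMod 2 :=
  if k % 2 = 0 then (Sum.inl (i + (k / 2) • (a : ZMod n)), j)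
  else (Sum.inr (i + (k / 2) • (a : ZMod n)), j + 1)

lemma spoke_cycles_inl (n a : ℕ) (hn : 3 ≤ n) (ha : ((a : ZMod n)) ≠ 0) (i : ZMod n) (j : ZMod 2) :
    Nonempty ((SimpleGraph.induce
        ((spokeGraph n (a : ZMod n)).connectedComponentMk (Sum.inl i, j)).supp
        (spokeGraph n (a : ZMod n))) ≃g
      SimpleGraph.cycleGraph (2 * n / Nat.gcd a n)) := by
  have hn0 : n ≠ 0 := by omega
  haveI : NeZero n := ⟨hn0⟩
  set b : ZMod n := (a : ZMod n) with hb
  set d : ℕ := addOrderOf b with hdd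
  have hd : d = n / Nat.gcd a n := by
    rw [hdd, hb, ZMod.addOrderOf_coe a hn0, Nat.gcd_comm]
  have hg : Nat.gcd a n ∣ n := Nat.gcd_dvd_right a n
  have hgpos : 0 < Nat.gcd a n := Nat.gcd_pos_of_pos_right a (by omega)
  have hmeq : 2 * n / Nat.gcd a n = 2 * d := by
    rw [hd, Nat.mul_div_assoc 2 hg]
  have hdg : d * Nat.gcd a n = n := by rw [hd]; exact Nat.div_mul_cancel hg
  have hd2 : 2 ≤ d := by
    rcases Nat.lt_or_ge d 2 with h | h
    · exfalso
      rcases (by omega : d = 0 ∨ d = 1) with h0 | h0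
      · rw [h0, zero_mul] at hdg; omega
      · rw [h0, one_mul] at hdg
        have : n ∣ a := hdg ▸ Nat.gcd_dvd_left a n
        exact ha ((ZMod.natCast_eq_zero_iff a n).mpr this)
    · exact h
  have hdb : d • b = 0 := addOrderOf_nsmul_eq_zero b
  set ψ : ℕ → (ZMod n ⊕ ZMod n) × ZMod 2 := spokePath n a i j with hψ
  have hψeven : ∀ k, k % 2 = 0 → ψ k = (Sum.inl (i + (k / 2) • b), j) := by
    intro k h; simp [hψ, spokePath, h, hb]
  have hψodd : ∀ k, k % 2 = 1 → ψ k = (Sum.inr (i + (k / 2) • b), j + 1) := by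
    intro k h; simp [hψ, spokePath, h, hb]
  have hper : Function.Periodic ψ (2 * d) := by
    intro k
    have h3 : (k + 2 * d) / 2 = k / 2 + d := by omega
    rcases Nat.mod_two_eq_zero_or_one k with h | h
    · rw [hψeven _ (by omega), hψeven _ h, h3, add_nsmul, hdb, add_zero]
    · rw [hψodd _ (by omega), hψodd _ h, h3, add_nsmul, hdb, add_zero]
  have hmod : ∀ k, ψ (k % (2 * d)) = ψ k := fun k => hper.map_mod_nat k
  have hdm1 : (d - 1) • b = -b := by
    have h1 : (d - 1 + 1) • b = (d - 1) • b + b := succ_nsmul b (d - 1)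
    have h2 : d - 1 + 1 = d := by omega
    rw [h2, hdb] at h1
    exact eq_neg_of_add_eq_zero_left h1.symm
  have hstep : ∀ k, (spokeGraph n b).Adj (ψ k) (ψ (k + 1)) := by
    intro k
    rcases Nat.mod_two_eq_zero_or_one k with h | h
    · rw [hψeven _ h, hψodd (k + 1) (by omega), spoke_adj_inl]
      left
      have : (k + 1) / 2 = k / 2 := by omega
      rw [this]
    · rw [hψodd _ h, hψeven (k + 1) (by omega), spoke_adj_inr]
      right
      have h1 : (k + 1) / 2 = k / 2 + 1 := by omega
      rw [h1, succ_nsmul, zmod2_add_one_add_one, ← add_assoc]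
  have hclosed : ∀ k z, (spokeGraph n b).Adj (ψ k) z →
      z = ψ (k + 1) ∨ z = ψ (k + (2 * d - 1)) := by
    intro k z hadj
    rcases Nat.mod_two_eq_zero_or_one k with h | h
    · rw [hψeven _ h, spoke_adj_inl] at hadj
      rcases hadj with rfl | rfl
      · left
        rw [hψodd (k + 1) (by omega)]
        have : (k + 1) / 2 = k / 2 := by omega
        rw [this]
      · right
        rw [hψodd (k + (2 * d - 1)) (by omega)]
        have h1 : (k + (2 * d - 1)) / 2 = k / 2 + (d - 1) := by omega
        rw [h1, add_nsmul, hdm1, sub_eq_add_neg, add_assoc]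
    · rw [hψodd _ h, spoke_adj_inr] at hadj
      rcases hadj with rfl | rfl
      · right
        rw [hψeven (k + (2 * d - 1)) (by omega)]
        have h1 : (k + (2 * d - 1)) / 2 = k / 2 + d := by omega
        rw [h1, add_nsmul, hdb, add_zero, zmod2_add_one_add_one]
      · left
        rw [hψeven (k + 1) (by omega)]
        have h1 : (k + 1) / 2 = k / 2 + 1 := by omega
        rw [h1, succ_nsmul, zmod2_add_one_add_one, ← add_assoc]
  have hsm : ∀ p q : ℕ, p < d → q < d → p • b = q • b → p = q := by
    intro p q hp hq hpq
    exact nsmul_injOn_Iio_addOrderOf (Set.mem_Iio.mpr hp) (Set.mem_Iio.mpr hq) hpq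
  have hinj : ∀ s t : ℕ, s < 2 * d → t < 2 * d → ψ s = ψ t → s = t := by
    intro s t hs ht hst
    rcases Nat.mod_two_eq_zero_or_one s with h1 | h1 <;>
      rcases Nat.mod_two_eq_zero_or_one t with h2 | h2
    · rw [hψeven _ h1, hψeven _ h2] at hst
      simp only [Prod.mk.injEq, Sum.inl.injEq] at hst
      have := hsm (s / 2) (t / 2) (by omega) (by omega) (add_left_cancel hst.1)
      omega
    · rw [hψeven _ h1, hψodd _ h2] at hst
      simp at hst
    · rw [hψodd _ h1, hψeven _ h2] at hst
      simp at hst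
    · rw [hψodd _ h1, hψodd _ h2] at hst
      simp only [Prod.mk.injEq, Sum.inr.injEq] at hst
      have := hsm (s / 2) (t / 2) (by omega) (by omega) (add_left_cancel hst.1)
      omega
  have hψ0 : ψ 0 = (Sum.inl i, j) := by
    rw [hψeven 0 rfl]
    norm_num
  have hreach : ∀ k, (spokeGraph n b).Reachable (Sum.inl i, j) (ψ k) := by
    intro k
    induction k with
    | zero => rw [hψ0]
    | succ k ih => exact ih.trans (hstep k).reachable
  have hT : ∀ y, (spokeGraph n b).Reachable (Sum.inl i, j) y → ∃ k, y = ψ k := by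
    intro y hy
    obtain ⟨w⟩ := hy
    suffices H : ∀ (u v : (ZMod n ⊕ ZMod n) × ZMod 2) (w : (spokeGraph n b).Walk u v),
        (∃ k, u = ψ k) → ∃ k, v = ψ k by
      exact H _ _ w ⟨0, hψ0.symm⟩
    intro u v w
    induction w with
    | nil => exact id
    | cons h p ih =>
      rintro ⟨k, rfl⟩
      apply ih
      rcases hclosed k _ h with h' | h'
      · exact ⟨_, h'⟩
      · exact ⟨_, h'⟩
  rw [hmeq]
  obtain ⟨m', hm'⟩ : ∃ m', 2 * d = m' + 2 := ⟨2 * d - 2, by omega⟩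
  rw [hm']
  have hsupp : ∀ y, y ∈ ((spokeGraph n b).connectedComponentMk (Sum.inl i, j)).supp ↔
      ∃ t : Fin (m' + 2), ψ t.val = y := by
    intro y
    rw [ConnectedComponent.mem_supp_iff, ConnectedComponent.eq]
    constructor
    · intro hy
      obtain ⟨k, rfl⟩ := hT y hy.symm
      have hlt := Nat.mod_lt k (show 0 < 2 * d by omega)
      refine ⟨⟨k % (2 * d), by omega⟩, ?_⟩
      exact hmod k
    · rintro ⟨t, rfl⟩
      exact (hreach t.val).symm
  let F : Fin (m' + 2) → ((spokeGraph n b).connectedComponentMk (Sum.inl i, j)).supp :=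
    fun t => ⟨ψ t.val, (hsupp _).mpr ⟨t, rfl⟩⟩
  have hFinj : Function.Injective F := by
    intro s t hst
    have h1 : ψ s.val = ψ t.val := congrArg Subtype.val hst
    have hs := s.isLt
    have ht := t.isLt
    exact Fin.ext (hinj s.val t.val (by omega) (by omega) h1)
  have hFsurj : Function.Surjective F := by
    rintro ⟨y, hy⟩
    obtain ⟨t, ht⟩ := (hsupp y).mp hy
    exact ⟨t, Subtype.ext ht⟩
  let e : Fin (m' + 2) ≃ ((spokeGraph n b).connectedComponentMk (Sum.inl i, j)).supp :=
    Equiv.ofBijective F ⟨hFinj, hFsurj⟩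
  have hval : ∀ (s t : Fin (m' + 2)) (k : ℕ), t.val = (s.val + k) % (m' + 2) →
      ψ t.val = ψ (s.val + k) := by
    intro s t k h
    have h2 := hmod (s.val + k)
    rw [hm'] at h2
    rw [h]
    exact h2
  have hadj_iff : ∀ s t : Fin (m' + 2),
      (spokeGraph n b).Adj (ψ s.val) (ψ t.val) ↔ (cycleGraph (m' + 2)).Adj s t := by
    intro s t
    rw [cycleGraph_adj]
    constructor
    · intro hadj
      rcases hclosed s.val _ hadj with h' | h'
      · right
        have h1 : ψ ((s + 1).val) = ψ (s.val + 1) := by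
          apply hval
          rw [Fin.add_def, Fin.val_one]
        have hb1 := t.isLt
        have hb2 := (s + 1).isLt
        have h2 : t = s + 1 :=
          Fin.ext (hinj t.val (s + 1).val (by omega) (by omega) (h'.trans h1.symm))
        rw [h2, add_sub_cancel_left]
      · left
        have hc : (2 * d - 1) = m' + 1 := by omega
        set c : Fin (m' + 2) := ⟨m' + 1, by omega⟩ with hcc
        have h1 : ψ ((s + c).val) = ψ (s.val + (2 * d - 1)) := by
          apply hval
          rw [Fin.add_def, hcc, hc]
        have hb1 := t.isLt
        have hb2 := (s + c).isLt
        have h2 : t = s + c :=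
          Fin.ext (hinj t.val (s + c).val (by omega) (by omega) (h'.trans h1.symm))
        have hc1 : c + 1 = 0 := by
          apply Fin.ext
          rw [Fin.add_def]
          simp [hcc]
        rw [h2, sub_add_eq_sub_sub, sub_self, zero_sub, neg_eq_iff_add_eq_zero, hc1]
    · intro hadj
      rcases hadj with h' | h'
      · -- s - t = 1, so s = t + 1
        have hs : s = t + 1 := sub_eq_iff_eq_add'.mp h' 
        have h1 : ψ ((t + 1).val) = ψ (t.val + 1) := by
          apply hval
          rw [Fin.add_def, Fin.val_one]
        rw [hs, h1]
        exact (hstep t.val).symm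
      · have ht : t = s + 1 := sub_eq_iff_eq_add'.mp h'
        have h1 : ψ ((s + 1).val) = ψ (s.val + 1) := by
          apply hval
          rw [Fin.add_def, Fin.val_one]
        rw [ht, h1]
        exact hstep s.val
  refine ⟨RelIso.symm ⟨e, ?_⟩⟩
  intro s t
  exact hadj_iff s t

/-- the spoke edges of `CDC(R_n(a,r))` form a disjoint union of cycles,
each of length `2n/gcd(a,n)`. -/
theorem spoke_cycles (n a r : ℕ) (hn : 3 ≤ n) (ha : (a : ZMod n) ≠ 0) (hr : (r : ZMod n) ≠ 0) :
    ∀ x : (ZMod n ⊕ ZMod n) × ZMod 2,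
      Nonempty ((SimpleGraph.induce
          ((spokeGraph n a).connectedComponentMk x).supp (spokeGraph n a)) ≃g
        SimpleGraph.cycleGraph (2 * n / Nat.gcd a n)) := by
  rintro ⟨v, j⟩
  cases v with
  | inl i => exact spoke_cycles_inl n a hn ha i j
  | inr i =>
    have hadj : (spokeGraph n (a : ZMod n)).Adj (Sum.inr i, j) (Sum.inl i, j + 1) :=
      spoke_adj_inr.mpr (Or.inl rfl)
    have hcc : (spokeGraph n (a : ZMod n)).connectedComponentMk (Sum.inr i, j)
        = (spokeGraph n (a : ZMod n)).connectedComponentMk (Sum.inl i, j + 1) :=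
      ConnectedComponent.sound hadj.reachable
    rw [hcc]
    exact spoke_cycles_inl n a hn ha i (j + 1)
end

section
/- Let Γ be a connected non-bipartite graph and let β be the automorphism of CDC(Γ) swapping (v,0) and (v,1) for all vertices v. Then an automorphism σ of CDC(Γ) is expected (i.e., lies in the subgroup generated by β and the lifts of automorphisms of Γ) if and only if σβ = βσ. -/
open SimpleGraph

private lemma zmod2_ne_add_one_s8 : ∀ a b : ZMod 2, a ≠ b + 1 → a = b := by decide
private lemma zmod2_self_ne_add_one : ∀ a : ZMod 2, a ≠ a + 1 := by decide
private lemma zmod2_cases : ∀ i : ZMod 2, i = 0 ∨ i = 1 := by decide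

/-- for a connected non-bipartite `Γ`, an automorphism `σ` of `CDC(Γ)` is
expected iff it commutes with the canonical involution `β`. -/
theorem expected_iff_commutes {V : Type*} [Fintype V] (G : SimpleGraph V)
    (hconn : G.Connected) (hnb : ¬ G.Colorable 2) :
    let β : Equiv.Perm (V × ZMod 2) := Equiv.prodCongr (Equiv.refl V) (Equiv.addLeft 1)
    let lifts : Set (Equiv.Perm (V × ZMod 2)) :=
      {σ | ∃ α : G ≃g G, σ = Equiv.prodCongr α.toEquiv (Equiv.refl (ZMod 2))}
    ∀ σ ∈ autSubgroup (cdc G),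
      σ ∈ Subgroup.closure ({β} ∪ lifts) ↔ σ * β = β * σ := by
  intro β lifts σ hσ
  constructor
  · -- closure → commutes
    intro h
    have hle : Subgroup.closure ({β} ∪ lifts) ≤ Subgroup.centralizer {β} := by
      rw [Subgroup.closure_le]
      intro τ hτ
      rw [SetLike.mem_coe, Subgroup.mem_centralizer_iff]
      intro g hg
      rcases hg with rfl
      rcases hτ with hτ | ⟨α, rfl⟩
      · rcases hτ with rfl; rfl
      · ext x
        · rfl
        · show (1 + x.2 : ZMod 2) = 1 + x.2
          rfl
    have := hle h
    rw [Subgroup.mem_centralizer_iff] at this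
    exact (this β rfl).symm
  · -- commutes → closure
    intro hc
    obtain ⟨v0⟩ := hconn.nonempty
    set f : V → V := fun v => (σ (v, 0)).1 with hf
    set g : V → ZMod 2 := fun v => (σ (v, 0)).2 with hg
    have hσ0 : ∀ v, σ (v, 0) = (f v, g v) := fun v => rfl
    have hσ1 : ∀ v, σ (v, 1) = (f v, g v + 1) := by
      intro v
      have h1 : (σ * β) (v, 0) = (β * σ) (v, 0) := by rw [hc]
      have h2 : β (v, 0) = (v, 1) := by
        simp [β, Equiv.prodCongr_apply]
      have h3 : β (σ (v, 0)) = (f v, 1 + g v) := by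
        rw [hσ0]; simp [β, Equiv.prodCongr_apply]
      simp only [Equiv.Perm.mul_apply, h2, h3] at h1
      rw [h1, add_comm]
    have hσi : ∀ v (i : ZMod 2), σ (v, i) = (f v, g v + i) := by
      intro v i
      rcases zmod2_cases i with rfl | rfl
      · rw [hσ0]; simp
      · exact hσ1 v
    -- adjacency
    have key : ∀ u v, (G.Adj (f u) (f v) ∧ g u ≠ g v + 1) ↔ G.Adj u v := by
      intro u v
      have := hσ (u, 0) (v, 1)
      rw [hσ0, hσ1] at this
      simpa [cdc] using this
    have hadj_eq : ∀ ⦃u v⦄, G.Adj u v → g u = g v := by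
      intro u v huv
      exact zmod2_ne_add_one_s8 _ _ ((key u v).mpr huv).2
    have hgconst : ∀ u v, g u = g v := by
      intro u v
      obtain ⟨w⟩ := hconn u v
      induction w with
      | nil => rfl
      | cons h p ih => exact (hadj_eq h).trans ih
    have hfadj : ∀ u v, G.Adj (f u) (f v) ↔ G.Adj u v := by
      intro u v
      rw [← key u v]
      have : g u ≠ g v + 1 := by rw [hgconst u v]; exact zmod2_self_ne_add_one _
      tauto
    have hfinj : Function.Injective f := by
      intro u v huv
      have h1 : σ (u, 0) = (f v, g u) := by rw [hσ0, huv]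
      rcases eq_or_ne (g u) (g v) with he | hne
      · have : σ (u, 0) = σ (v, 0) := by rw [h1, hσ0, he]
        have := σ.injective this
        exact (Prod.ext_iff.mp this).1
      · have he : g u = g v + 1 := by
          by_contra h
          exact hne (zmod2_ne_add_one_s8 _ _ h)
        have : σ (u, 0) = σ (v, 1) := by rw [h1, hσ1, he]
        have h2 : (0 : ZMod 2) = 1 := (Prod.ext_iff.mp (σ.injective this)).2
        exact absurd h2 (by decide)
    have hfbij : Function.Bijective f := Finite.injective_iff_bijective.mp hfinj
    let e : V ≃ V := Equiv.ofBijective f hfbij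
    let α : G ≃g G := ⟨e, by intro a b; exact hfadj a b⟩
    have hmem_lift : Equiv.prodCongr α.toEquiv (Equiv.refl (ZMod 2)) ∈
        Subgroup.closure ({β} ∪ lifts) :=
      Subgroup.subset_closure (Or.inr ⟨α, rfl⟩)
    have hmemβ : β ∈ Subgroup.closure ({β} ∪ lifts) :=
      Subgroup.subset_closure (Or.inl rfl)
    have hdecomp : σ = Equiv.prodCongr α.toEquiv (Equiv.refl (ZMod 2)) * β ^ (g v0).val := by
      apply Equiv.ext
      rintro ⟨v, i⟩
      have hβk : (β ^ (g v0).val) (v, i) = (v, g v0 + i) := by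
        rcases zmod2_cases (g v0) with h0 | h1
        · rw [h0]; simp
        · have hv : ((1 : ZMod 2)).val = 1 := rfl
          rw [h1, hv, pow_one]
          simp [β, Equiv.prodCongr_apply]
      rw [Equiv.Perm.mul_apply, hβk, hσi v i]
      show (f v, g v + i) = (f v, g v0 + i)
      rw [hgconst v v0]
    rw [hdecomp]
    exact Subgroup.mul_mem _ hmem_lift (Subgroup.pow_mem _ hmemβ _)
end

section
/- Let Γ be a connected non-bipartite graph. An automorphism σ of CDC(Γ) is expected if and only if for every vertex v of Γ there exists a vertex w of Γ with σ({(v,0),(v,1)}) = {(w,0),(w,1)}. -/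
open SimpleGraph

section Aux

variable {V : Type*}

/-- The fiber over a vertex in the double cover. -/
def cdcFiber (v : V) : Set (V × ZMod 2) := {(v, 0), (v, 1)}

lemma mem_cdcFiber_iff {v : V} {x : V × ZMod 2} : x ∈ cdcFiber v ↔ x.1 = v := by
  rcases x with ⟨a, i⟩
  fin_cases i
  · simp [cdcFiber, Prod.ext_iff]; exact ⟨fun h => h.elim And.left And.left, fun h => Or.inl ⟨h, rfl⟩⟩
  · simp [cdcFiber, Prod.ext_iff]; exact ⟨fun h => h.elim And.left And.left, fun h => Or.inr ⟨h, rfl⟩⟩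

lemma cdcFiber_inj {v w : V} (h : cdcFiber v = cdcFiber w) : v = w := by
  have : (v, (0 : ZMod 2)) ∈ cdcFiber w := h ▸ (by simp [cdcFiber])
  simpa using (mem_cdcFiber_iff.mp this)

/-- The subgroup of permutations of `V × ZMod 2` that map fibers onto fibers. -/
def fiberSubgroup (V : Type*) [Finite V] : Subgroup (Equiv.Perm (V × ZMod 2)) where
  carrier := {σ | ∀ v, ∃ w, (σ : V × ZMod 2 → V × ZMod 2) '' cdcFiber v = cdcFiber w}
  one_mem' := fun v => ⟨v, by simp⟩
  mul_mem' := by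
    intro σ τ hσ hτ v
    obtain ⟨w, hw⟩ := hτ v
    obtain ⟨u, hu⟩ := hσ w
    refine ⟨u, ?_⟩
    rw [show ((σ * τ : Equiv.Perm (V × ZMod 2)) : V × ZMod 2 → V × ZMod 2)
        = (σ : V × ZMod 2 → V × ZMod 2) ∘ (τ : V × ZMod 2 → V × ZMod 2) from rfl,
      Set.image_comp, hw, hu]
  inv_mem' := by
    intro σ hσ v
    have hσ' : ∀ v, ∃ w, (σ : V × ZMod 2 → V × ZMod 2) '' cdcFiber v = cdcFiber w := hσ
    choose f hf using hσ'
    have hinj : Function.Injective f := by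
      intro a b hab
      have : (σ : V × ZMod 2 → V × ZMod 2) '' cdcFiber a
          = (σ : V × ZMod 2 → V × ZMod 2) '' cdcFiber b := by rw [hf a, hf b, hab]
      exact cdcFiber_inj (Set.image_injective.mpr σ.injective this)
    obtain ⟨u, hu⟩ := Finite.injective_iff_surjective.mp hinj v
    refine ⟨u, ?_⟩
    rw [← hu, ← hf u]
    show σ.symm '' _ = _
    rw [Equiv.symm_image_image]

lemma walk_locally_const {G : SimpleGraph V} (t : V → ZMod 2)
    (h : ∀ v w, G.Adj v w → t v = t w) {x y : V} (p : G.Walk x y) : t x = t y := by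
  induction p with
  | nil => rfl
  | cons h' _ ih => exact (h _ _ h').trans ih

end Aux

/-- Huang–Marušič: for a connected non-bipartite `Γ`, an automorphism `σ`
of `CDC(Γ)` is expected iff `σ` maps every fiber `{(v,0),(v,1)}` onto a fiber. -/
theorem expected_iff_fibers {V : Type*} [Fintype V] (G : SimpleGraph V)
    (hconn : G.Connected) (hnb : ¬ G.Colorable 2) :
    let β : Equiv.Perm (V × ZMod 2) := Equiv.prodCongr (Equiv.refl V) (Equiv.addLeft 1)
    let lifts : Set (Equiv.Perm (V × ZMod 2)) :=
      {σ | ∃ α : G ≃g G, σ = Equiv.prodCongr α.toEquiv (Equiv.refl (ZMod 2))}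
    ∀ σ ∈ autSubgroup (cdc G),
      σ ∈ Subgroup.closure ({β} ∪ lifts) ↔
        ∀ v : V, ∃ w : V,
          (σ : V × ZMod 2 → V × ZMod 2) '' {(v, 0), (v, 1)} = {(w, 0), (w, 1)} := by
  intro β lifts σ hσaut
  constructor
  · -- closure elements preserve fibers
    intro hmem v
    have hsub : ({β} ∪ lifts : Set (Equiv.Perm (V × ZMod 2))) ≤ fiberSubgroup V := by
      rintro τ (rfl | ⟨α, rfl⟩)
      · intro u
        refine ⟨u, ?_⟩
        show (β : V × ZMod 2 → V × ZMod 2) '' cdcFiber u = cdcFiber u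
        rw [show cdcFiber u = {(u, 0), (u, 1)} from rfl, Set.image_pair]
        have h1 : β (u, 0) = (u, 1) := Prod.ext rfl (show (1 : ZMod 2) + 0 = 1 by decide)
        have h2 : β (u, 1) = (u, 0) := Prod.ext rfl (show (1 : ZMod 2) + 1 = 0 by decide)
        rw [h1, h2]
        exact Set.pair_comm _ _
      · intro u
        refine ⟨α u, ?_⟩
        show (Equiv.prodCongr α.toEquiv (Equiv.refl (ZMod 2)) : V × ZMod 2 → V × ZMod 2) ''
          cdcFiber u = cdcFiber (α u)
        rw [show cdcFiber u = {(u, 0), (u, 1)} from rfl, Set.image_pair]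
        rfl
    exact (Subgroup.closure_le (fiberSubgroup V)).mpr hsub hmem v
  · -- fiber-preserving automorphisms are expected
    intro hfib
    set a : V → V := fun v => (σ (v, 0)).1 with ha
    set t : V → ZMod 2 := fun v => (σ (v, 0)).2 with hT
    have key : ∀ v i, σ (v, i) = (a v, i + t v) := by
      intro v i
      obtain ⟨w, hw⟩ := hfib v
      have h0 : σ (v, 0) ∈ ({(w, 0), (w, 1)} : Set (V × ZMod 2)) := by
        rw [← hw]; exact ⟨(v, 0), by simp, rfl⟩
      have h1 : σ (v, 1) ∈ ({(w, 0), (w, 1)} : Set (V × ZMod 2)) := by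
        rw [← hw]; exact ⟨(v, 1), by simp, rfl⟩
      have hfst0 : (σ (v, 0)).1 = w := mem_cdcFiber_iff.mp h0
      have hfst1 : (σ (v, 1)).1 = w := mem_cdcFiber_iff.mp h1
      have hne : σ (v, 0) ≠ σ (v, 1) := by
        intro h
        have := σ.injective h
        simp [Prod.ext_iff] at this
      have hsnd : (σ (v, 1)).2 ≠ (σ (v, 0)).2 := by
        intro h
        exact hne (Prod.ext (hfst0.trans hfst1.symm) h.symm)
      have hsnd1 : (σ (v, 1)).2 = 1 + (σ (v, 0)).2 := by
        revert hsnd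
        generalize (σ (v, 1)).2 = x
        generalize (σ (v, 0)).2 = y
        revert x y; decide
      fin_cases i
      · refine Prod.ext rfl ?_
        show (σ (v, 0)).2 = 0 + t v
        rw [zero_add]
      · refine Prod.ext ?_ ?_
        · show (σ (v, 1)).1 = a v
          rw [hfst1, ← hfst0]
        · show (σ (v, 1)).2 = 1 + t v
          exact hsnd1
    have hadj : ∀ v w, G.Adj v w → G.Adj (a v) (a w) ∧ t v = t w := by
      intro v w h
      have h1 : (cdc G).Adj (v, 0) (w, 1) := ⟨h, by show (0 : ZMod 2) ≠ 1; decide⟩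
      have h2 : (cdc G).Adj (σ (v, 0)) (σ (w, 1)) := (hσaut _ _).mpr h1
      rw [key, key] at h2
      refine ⟨h2.1, ?_⟩
      have h3 : (0 : ZMod 2) + t v ≠ 1 + t w := h2.2
      revert h3
      generalize t v = x; generalize t w = y
      revert x y; decide
    have hadj' : ∀ v w, G.Adj (a v) (a w) → G.Adj v w := by
      intro v w h
      have hne : (0 : ZMod 2) + t v ≠ (t v + t w + 1) + t w := by
        generalize t v = x; generalize t w = y
        revert x y; decide
      have h2 : (cdc G).Adj (σ (v, 0)) (σ (w, t v + t w + 1)) := by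
        rw [key, key]; exact ⟨h, hne⟩
      exact ((hσaut _ _).mp h2).1
    have hainj : Function.Injective a := by
      intro v w h
      have heq : σ (v, 0) = σ (w, t v + t w) := by
        rw [key, key, h]
        refine Prod.ext rfl ?_
        show (0 : ZMod 2) + t v = (t v + t w) + t w
        generalize t v = x; generalize t w = y
        revert x y; decide
      exact (Prod.ext_iff.mp (σ.injective heq)).1
    have habij : Function.Bijective a := (Finite.injective_iff_bijective).mp hainj
    let e : V ≃ V := Equiv.ofBijective a habij
    have he : ∀ v, e v = a v := fun v => rfl
    let α : G ≃g G :=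
      { toEquiv := e
        map_rel_iff' := by
          intro x y
          constructor
          · intro h; exact hadj' x y (by rwa [he, he] at h)
          · intro h; rw [he, he]; exact (hadj x y h).1 }
    obtain ⟨v₀⟩ := hconn.nonempty
    have htconst : ∀ v, t v = t v₀ := by
      intro v
      obtain ⟨p⟩ := hconn.preconnected v v₀
      exact walk_locally_const t (fun x y h => (hadj x y h).2) p
    have hc : t v₀ = 0 ∨ t v₀ = 1 := by
      generalize t v₀ = x; revert x; decide
    have hliftmem : (Equiv.prodCongr α.toEquiv (Equiv.refl (ZMod 2)) : Equiv.Perm (V × ZMod 2))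
        ∈ Subgroup.closure ({β} ∪ lifts) :=
      Subgroup.subset_closure (Or.inr ⟨α, rfl⟩)
    rcases hc with hc | hc
    · have hσeq : σ = Equiv.prodCongr α.toEquiv (Equiv.refl (ZMod 2)) := by
        apply Equiv.ext
        rintro ⟨v, i⟩
        rw [key]
        refine Prod.ext (he v).symm ?_
        show i + t v = i
        rw [htconst v, hc, add_zero]
      rw [hσeq]; exact hliftmem
    · have hσeq : σ = β * Equiv.prodCongr α.toEquiv (Equiv.refl (ZMod 2)) := by
        apply Equiv.ext
        rintro ⟨v, i⟩
        rw [Equiv.Perm.mul_apply, key]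
        refine Prod.ext (he v).symm ?_
        show i + t v = 1 + i
        rw [htconst v, hc, add_comm]
      rw [hσeq]
      exact mul_mem (Subgroup.subset_closure (Or.inl rfl)) hliftmem
end

section
/- Let Γ = R_n(a,r) with n = 2m even, a even, r even, 2a ≢ 0 (mod n), and 4r ≢ 0 (mod n). Set S_1 = {u_{i,j} : i ≡ j (mod 2)} and S_2 = {u_{i,j} : i ≢ j (mod 2)} in CDC(Γ). Then the only automorphism of CDC(Γ) fixing S_1 pointwise and S_2 setwise is the identity. -/
open SimpleGraph

/-- under the stated arithmetic conditions, the only automorphism of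
`CDC(R_n(a,r))` fixing the rim cycle `S₁` pointwise and `S₂` setwise is the identity. -/
theorem fix_rim_identity_11 (n a r : ℕ) (hn : 3 ≤ n) (hne : Even n) (hae : Even a) (hre : Even r) (h2a : ¬ n ∣ 2 * a) (h4r : ¬ n ∣ 4 * r)
    (ha : (a : ZMod n) ≠ 0) (hr : (r : ZMod n) ≠ 0) :
    let S1 : Set ((ZMod n ⊕ ZMod n) × ZMod 2) :=
      {p | ∃ (i : ZMod n) (j : ZMod 2), p = (Sum.inl i, j) ∧ ((ZMod.val i : ZMod 2) = j)}
    let S2 : Set ((ZMod n ⊕ ZMod n) × ZMod 2) :=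
      {p | ∃ (i : ZMod n) (j : ZMod 2), p = (Sum.inl i, j) ∧ ((ZMod.val i : ZMod 2) ≠ j)}
    ∀ σ ∈ autSubgroup (cdc (roseWindow n a r)),
      (∀ x ∈ S1, σ x = x) → (σ : _ → _) '' S2 = S2 → ∀ x, σ x = x := by
  intro S1 S2 σ hσ hfix hS2
  haveI : NeZero n := ⟨by omega⟩
  have hdvd : 2 ∣ n := hne.two_dvd
  set f : ZMod n →+* ZMod 2 := ZMod.castHom hdvd (ZMod 2) with hfdef
  have hval : ∀ i : ZMod n, ((ZMod.val i : ZMod 2)) = f i := by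
    intro i; simp [hfdef, ZMod.natCast_val, ZMod.castHom_apply]
  have hfa : f (a : ZMod n) = 0 := by
    rw [hfdef, map_natCast, ZMod.natCast_eq_zero_iff]; exact hae.two_dvd
  have hfr : f (r : ZMod n) = 0 := by
    rw [hfdef, map_natCast, ZMod.natCast_eq_zero_iff]; exact hre.two_dvd
  have h2a' : (a : ZMod n) + a ≠ 0 := by
    intro h; apply h2a
    rw [← ZMod.natCast_eq_zero_iff]; push_cast; linear_combination h
  have h2r' : (r : ZMod n) + r ≠ 0 := by
    intro h; apply h4r
    rw [← ZMod.natCast_eq_zero_iff]; push_cast; linear_combination 2 * h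
  have h4r' : (r : ZMod n) + r + r + r ≠ 0 := by
    intro h; apply h4r
    rw [← ZMod.natCast_eq_zero_iff]; push_cast; linear_combination h
  -- adjacency characterizations
  have adj_ll : ∀ i i' : ZMod n, (roseWindow n a r).Adj (Sum.inl i) (Sum.inl i') ↔
      i ≠ i' ∧ (i' = i + 1 ∨ i = i' + 1) := by
    intro i i'; simp [roseWindow, SimpleGraph.fromRel_adj]
  have adj_lr : ∀ i k : ZMod n, (roseWindow n a r).Adj (Sum.inl i) (Sum.inr k) ↔
      (i = k ∨ i = k + a) := by
    intro i k; simp [roseWindow, SimpleGraph.fromRel_adj]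
  have adj_rl : ∀ i k : ZMod n, (roseWindow n a r).Adj (Sum.inr k) (Sum.inl i) ↔
      (i = k ∨ i = k + a) := by
    intro i k; simp [roseWindow, SimpleGraph.fromRel_adj]
  have adj_rr : ∀ k k' : ZMod n, (roseWindow n a r).Adj (Sum.inr k) (Sum.inr k') ↔
      k ≠ k' ∧ (k' = k + r ∨ k = k' + r) := by
    intro k k'; simp [roseWindow, SimpleGraph.fromRel_adj]
  have cadj : ∀ x y : (ZMod n ⊕ ZMod n) × ZMod 2,
      (cdc (roseWindow n a r)).Adj x y ↔ ((roseWindow n a r).Adj x.1 y.1 ∧ x.2 ≠ y.2) :=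
    fun _ _ => Iff.rfl
  -- ZMod 2 facts
  have z2a : ∀ x y : ZMod 2, x ≠ y → x = y + 1 := by decide
  have z2b : ∀ y : ZMod 2, y ≠ y + 1 := by decide
  have z2c : ∀ x y : ZMod 2, x ≠ y + 1 → x = y := by decide
  have z2d : ∀ y : ZMod 2, y + 1 + 1 = y := by decide
  have hone : (1 : ZMod n) ≠ 0 := by
    intro h
    have := ZMod.natCast_eq_zero_iff 1 n
    simp at this
    rw [this] at h; omega
  -- fixed points of S1
  have hfix1 : ∀ (i : ZMod n) (j : ZMod 2), f i = j → σ (Sum.inl i, j) = (Sum.inl i, j) := by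
    intro i j h
    exact hfix _ ⟨i, j, rfl, by rw [hval]; exact h⟩
  -- Step 1 : hub vertices with f i ≠ j are fixed
  have step1 : ∀ (i : ZMod n) (j : ZMod 2), f i ≠ j → σ (Sum.inr i, j) = (Sum.inr i, j) := by
    intro i j hij
    have hfij : f i = j + 1 := z2a _ _ hij
    have hu1 : σ (Sum.inl i, j + 1) = (Sum.inl i, j + 1) := hfix1 i (j+1) hfij
    have hu2 : σ (Sum.inl (i + a), j + 1) = (Sum.inl (i + a), j + 1) := by
      apply hfix1; rw [map_add, hfa, add_zero]; exact hfij
    have hadj1 : (cdc (roseWindow n a r)).Adj (σ (Sum.inr i, j)) (Sum.inl i, j + 1) := by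
      rw [← hu1, hσ, cadj]
      exact ⟨(adj_rl i i).mpr (Or.inl rfl), z2b j⟩
    have hadj2 : (cdc (roseWindow n a r)).Adj (σ (Sum.inr i, j)) (Sum.inl (i + a), j + 1) := by
      rw [← hu2, hσ, cadj]
      exact ⟨(adj_rl (i + a) i).mpr (Or.inr rfl), z2b j⟩
    rcases hx : σ (Sum.inr i, j) with ⟨w | w, c⟩ <;> rw [hx, cadj] at hadj1 hadj2
    · -- image is a rim vertex : impossible (it would be a fixed S1 vertex)
      exfalso
      have hc : c = j := z2c _ _ hadj1.2
      have hw : f w = j := by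
        rcases (adj_ll w i).mp hadj1.1 with ⟨-, h | h⟩
        · have : f i = f w + 1 := by rw [h, map_add, map_one]
          rw [hfij] at this
          have := z2d j ▸ congrArg (· + 1) this.symm
          simpa [z2d] using this
        · rw [h, map_add, map_one, hfij, z2d]
      have h1 := hfix1 w c (by rw [hc]; exact hw)
      rw [← hx] at h1
      have h2 := σ.injective h1
      rw [hx] at h2
      simp at h2
    · -- image is a hub vertex
      rcases (adj_rl i w).mp hadj1.1 with h | h
      · have hc : c = j := z2c _ _ hadj1.2
        rw [← h, hc]
      · exfalso
        rcases (adj_rl (i + a) w).mp hadj2.1 with h' | h'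
        · exact h2a' (by linear_combination h' - h)
        · exact ha (by linear_combination h' - h)
  -- Step 2 : hub vertices with f i = j are fixed
  have step2 : ∀ (i : ZMod n) (j : ZMod 2), f i = j → σ (Sum.inr i, j) = (Sum.inr i, j) := by
    intro i j hij
    have hv1 : σ (Sum.inr (i + r), j + 1) = (Sum.inr (i + r), j + 1) := by
      apply step1; rw [map_add, hfr, add_zero, hij]; exact z2b j
    have hv2 : σ (Sum.inr (i - r), j + 1) = (Sum.inr (i - r), j + 1) := by
      apply step1; rw [map_sub, hfr, sub_zero, hij]; exact z2b j
    have hadj1 : (cdc (roseWindow n a r)).Adj (σ (Sum.inr i, j)) (Sum.inr (i + r), j + 1) := by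
      rw [← hv1, hσ, cadj]
      refine ⟨(adj_rr i (i + r)).mpr ⟨?_, Or.inl rfl⟩, z2b j⟩
      intro h; exact hr (by linear_combination -h)
    have hadj2 : (cdc (roseWindow n a r)).Adj (σ (Sum.inr i, j)) (Sum.inr (i - r), j + 1) := by
      rw [← hv2, hσ, cadj]
      refine ⟨(adj_rr i (i - r)).mpr ⟨?_, Or.inr (by ring)⟩, z2b j⟩
      intro h; exact hr (by linear_combination h)
    rcases hx : σ (Sum.inr i, j) with ⟨w | w, c⟩ <;> rw [hx, cadj] at hadj1 hadj2
    · exfalso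
      have hc : c = j := z2c _ _ hadj1.2
      have hw : f w = j := by
        rcases (adj_lr w (i + r)).mp hadj1.1 with h | h
        · rw [h, map_add, hfr, add_zero, hij]
        · rw [h, map_add, map_add, hfr, hfa, add_zero, add_zero, hij]
      have h1 := hfix1 w c (by rw [hc]; exact hw)
      rw [← hx] at h1
      have h2 := σ.injective h1
      rw [hx] at h2
      simp at h2
    · rcases (adj_rr w (i + r)).mp hadj1.1 with ⟨-, h | h⟩
      · have hwi : w = i := by linear_combination -h
        have hc : c = j := z2c _ _ hadj1.2
        rw [hwi, hc]
      · exfalso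
        rcases (adj_rr w (i - r)).mp hadj2.1 with ⟨-, h' | h'⟩
        · exact h4r' (by linear_combination -h - h')
        · exact h2r' (by linear_combination h' - h)
  have hubfix : ∀ (k : ZMod n) (c : ZMod 2), σ (Sum.inr k, c) = (Sum.inr k, c) := by
    intro k c
    by_cases h : f k = c
    · exact step2 k c h
    · exact step1 k c h
  -- Step 3 : all rim vertices are fixed
  have rimfix : ∀ (i : ZMod n) (j : ZMod 2), σ (Sum.inl i, j) = (Sum.inl i, j) := by
    intro i j
    have hadj1 : (cdc (roseWindow n a r)).Adj (σ (Sum.inl i, j)) (Sum.inr i, j + 1) := by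
      rw [← hubfix i (j + 1), hσ, cadj]
      exact ⟨(adj_lr i i).mpr (Or.inl rfl), z2b j⟩
    have hadj2 : (cdc (roseWindow n a r)).Adj (σ (Sum.inl i, j)) (Sum.inr (i - a), j + 1) := by
      rw [← hubfix (i - a) (j + 1), hσ, cadj]
      exact ⟨(adj_lr i (i - a)).mpr (Or.inr (by ring)), z2b j⟩
    rcases hx : σ (Sum.inl i, j) with ⟨w | w, c⟩ <;> rw [hx, cadj] at hadj1 hadj2
    · rcases (adj_lr w i).mp hadj1.1 with h | h
      · have hc : c = j := z2c _ _ hadj1.2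
        rw [h, hc]
      · exfalso
        rcases (adj_lr w (i - a)).mp hadj2.1 with h' | h'
        · exact h2a' (by linear_combination h' - h)
        · exact ha (by linear_combination h' - h)
    · exfalso
      have hc : c = j := z2c _ _ hadj1.2
      have h1 := hubfix w c
      rw [← hx] at h1
      have h2 := σ.injective h1
      rw [hx] at h2
      simp at h2
  intro x
  rcases x with ⟨w | w, c⟩
  · exact rimfix w c
  · exact hubfix w c
end

section
/- Let n be odd and Γ = R_n(a,r). Define a' = a if a is even and a' = a + n if a is odd, and r' = r if r is odd and r' = r + n if r is even (computed in Z_{2n}). Then CDC(Γ) is isomorphic to the Rose Window graph R_{2n}(a', r'), via the map u_{i,j} ↦ u_{θ(i,j)}, v_{i,j} ↦ v_{θ(i,j)+n} where θ : Z_n × Z_2 → Z_{2n} is the unique group isomorphism sending (1,1) to 1. -/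
open SimpleGraph

/-- for odd `n`, `CDC(R_n(a,r)) ≅ R_{2n}(a',r')` via
`u_{i,j} ↦ u_{θ(i,j)}`, `v_{i,j} ↦ v_{θ(i,j)+n}`, where `θ : ℤ_n × ℤ₂ ≃ ℤ_{2n}` is the
group isomorphism with `θ(1,1) = 1`, `a' = a` or `a+n` (whichever is even) and
`r' = r` or `r+n` (whichever is odd). -/
theorem cdc_odd_is_roseWindow (n a r : ℕ) (hn : 3 ≤ n) (hodd : Odd n)
    (ha : (a : ZMod n) ≠ 0) (hr : (r : ZMod n) ≠ 0) :
    ∃ θ : ZMod n × ZMod 2 ≃+ ZMod (2 * n),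
      θ (1, 1) = 1 ∧
      ∃ e : cdc (roseWindow n a r) ≃g
          roseWindow (2 * n) (((if Even a then a else a + n : ℕ) : ZMod (2 * n)))
            (((if Odd r then r else r + n : ℕ) : ZMod (2 * n))),
        (∀ (i : ZMod n) (j : ZMod 2), e (Sum.inl i, j) = Sum.inl (θ (i, j))) ∧
        (∀ (i : ZMod n) (j : ZMod 2), e (Sum.inr i, j) = Sum.inr (θ (i, j) + n)) := by
  
  haveI : NeZero (2*n) := ⟨by omega⟩
  haveI : Fact (1 < n) := ⟨by omega⟩
  have cop : Nat.Coprime 2 n := hodd.coprime_two_left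
  set χ := ZMod.chineseRemainder cop with hχ
  set θ : ZMod n × ZMod 2 ≃+ ZMod (2*n) :=
    (AddEquiv.prodComm : ZMod n × ZMod 2 ≃+ ZMod 2 × ZMod n).trans χ.symm.toAddEquiv with hθ
  have hsymm : ∀ c : ℕ, θ.symm ((c : ℕ) : ZMod (2*n)) = ((c:ZMod n), (c:ZMod 2)) := by
    intro c
    have h1 : χ ((c:ℕ) : ZMod (2*n)) = ((c:ZMod 2), (c:ZMod n)) := by
      rw [map_natCast]; rfl
    have h2 : (χ.symm.toAddEquiv.symm : ZMod (2*n) → ZMod 2 × ZMod n) = χ := rfl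
    simp only [hθ, AddEquiv.symm_trans_apply, h2, h1]
    rfl
  have hone : θ ((1:ZMod n), (1:ZMod 2)) = 1 := by
    have h := hsymm 1
    simp only [Nat.cast_one] at h
    rw [← h, θ.apply_symm_apply]
  have hkey : ∀ (c:ℕ) (i i' : ZMod n) (j j' : ZMod 2),
      θ (i',j') = θ (i,j) + ((c:ℕ):ZMod (2*n)) ↔ (i' = i + (c:ZMod n) ∧ j' = j + (c:ZMod 2)) := by
    intro c i i' j j'
    rw [show ((c:ℕ):ZMod (2*n)) = θ ((c:ZMod n),(c:ZMod 2)) from by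
        rw [← hsymm c, θ.apply_symm_apply],
      ← map_add, θ.injective.eq_iff, Prod.mk_add_mk, Prod.mk.injEq]
  have hInj : ∀ (i i' : ZMod n) (j j' : ZMod 2), θ (i,j) = θ (i',j') ↔ (i = i' ∧ j = j') := by
    intro i i' j j'
    rw [θ.injective.eq_iff, Prod.mk.injEq]
  -- parity computations
  have hodd2 : ∀ c:ℕ, Odd c → ((c:ℕ):ZMod 2) = 1 := by
    intro c hc; rw [← ZMod.natCast_mod, Nat.odd_iff.mp hc, Nat.cast_one]
  have heven2 : ∀ c:ℕ, Even c → ((c:ℕ):ZMod 2) = 0 := by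
    intro c hc; rw [← ZMod.natCast_mod, Nat.even_iff.mp hc, Nat.cast_zero]
  set a' : ℕ := if Even a then a else a + n with ha'
  set r' : ℕ := if Odd r then r else r + n with hr'
  have ha'2 : ((a':ℕ) : ZMod 2) = 0 := by
    apply heven2
    rw [ha']; split
    · assumption
    · rename_i h; exact (Nat.not_even_iff_odd.mp h).add_odd hodd
  have hr'2 : ((r':ℕ) : ZMod 2) = 1 := by
    apply hodd2
    rw [hr']; split
    · assumption
    · rename_i h; exact (Nat.not_odd_iff_even.mp h).add_odd hodd
  have ha'n : ((a':ℕ) : ZMod n) = (a : ZMod n) := by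
    rw [ha']; split
    · rfl
    · push_cast [ZMod.natCast_self]; ring
  have hr'n : ((r':ℕ) : ZMod n) = (r : ZMod n) := by
    rw [hr']; split
    · rfl
    · push_cast [ZMod.natCast_self]; ring
  -- specialized key lemmas
  have hj2 : ∀ j j' : ZMod 2, j' = j + 1 ↔ ¬ j = j' := by decide
  have k1 : ∀ (i i' : ZMod n) (j j' : ZMod 2),
      θ (i',j') = θ (i,j) + 1 ↔ (i' = i + 1 ∧ j' = j + 1) := by
    intro i i' j j'
    have := hkey 1 i i' j j'
    simpa using this
  have kn : ∀ (i i' : ZMod n) (j j' : ZMod 2),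
      θ (i',j') = θ (i,j) + (n : ZMod (2*n)) ↔ (i' = i ∧ j' = j + 1) := by
    intro i i' j j'
    rw [hkey n i i' j j', ZMod.natCast_self, add_zero, hodd2 n hodd]
  have kr : ∀ (i i' : ZMod n) (j j' : ZMod 2),
      θ (i',j') = θ (i,j) + ((r':ℕ) : ZMod (2*n)) ↔ (i' = i + (r:ZMod n) ∧ j' = j + 1) := by
    intro i i' j j'
    rw [hkey r' i i' j j', hr'n, hr'2]
  have kna : ∀ (i i' : ZMod n) (j j' : ZMod 2),
      θ (i',j') = θ (i,j) + (n : ZMod (2*n)) + ((a':ℕ) : ZMod (2*n)) ↔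
        (i' = i + (a:ZMod n) ∧ j' = j + 1) := by
    intro i i' j j'
    rw [add_assoc, ← Nat.cast_add, hkey (n+a') i i' j j', Nat.cast_add, Nat.cast_add,
      ZMod.natCast_self, zero_add, ha'n, hodd2 n hodd, ha'2, add_zero]
  have hz : ∀ (c : ZMod n), c ≠ 0 → ∀ i i' : ZMod n, i' = i + c → ¬ i = i' := by
    intro c hc i i' h1 h2
    rw [← h2] at h1
    exact hc (left_eq_add.mp h1)
  -- the equivalence
  set f : (ZMod n ⊕ ZMod n) × ZMod 2 → ZMod (2*n) ⊕ ZMod (2*n) := fun x =>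
    match x with
    | (Sum.inl i, j) => Sum.inl (θ (i,j))
    | (Sum.inr i, j) => Sum.inr (θ (i,j) + (n : ZMod (2*n))) with hf
  set g : ZMod (2*n) ⊕ ZMod (2*n) → (ZMod n ⊕ ZMod n) × ZMod 2 := fun k =>
    match k with
    | Sum.inl m => (Sum.inl (θ.symm m).1, (θ.symm m).2)
    | Sum.inr m => (Sum.inr (θ.symm (m - (n : ZMod (2*n)))).1,
        (θ.symm (m - (n : ZMod (2*n)))).2) with hg
  have hleft : Function.LeftInverse g f := by
    rintro ⟨i|i, j⟩ <;> simp [hf, hg]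
  have hright : Function.RightInverse g f := by
    rintro (m|m)
    · simp only [hf, hg]; rw [Prod.mk.eta, θ.apply_symm_apply]
    · simp only [hf, hg]; rw [Prod.mk.eta, θ.apply_symm_apply, sub_add_cancel]
  refine ⟨θ, hone, ⟨⟨⟨f, g, hleft, hright⟩, ?_⟩, fun i j => rfl, fun i j => rfl⟩⟩
  rintro ⟨x|x, j⟩ ⟨y|y, j'⟩ <;>
    simp only [hf, Equiv.coe_fn_mk, roseWindow, cdc, fromRel_adj, ne_eq, Sum.inl.injEq,
      Sum.inr.injEq, Sum.elim_inl, Sum.elim_inr, reduceCtorEq, not_false_iff, false_or,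
      or_false, true_and, false_and, and_false, false_iff, iff_false, add_left_inj]
  · -- u u
    rw [k1 x y j j', k1 y x j' j, hInj x y j j']
    constructor
    · rintro ⟨hne, ⟨h1,h2⟩ | ⟨h1,h2⟩⟩
      · exact ⟨⟨hz 1 one_ne_zero x y h1, Or.inl h1⟩, (hj2 j j').mp h2⟩
      · exact ⟨⟨fun hh => hz 1 one_ne_zero y x h1 hh.symm, Or.inr h1⟩,
          fun hh => (hj2 j' j).mp h2 hh.symm⟩
    · rintro ⟨⟨hii, h | h⟩, hjj⟩
      · exact ⟨fun hh => hjj hh.2, Or.inl ⟨h, (hj2 j j').mpr hjj⟩⟩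
      · exact ⟨fun hh => hjj hh.2, Or.inr ⟨h, (hj2 j' j).mpr (fun hh => hjj hh.symm)⟩⟩
  · -- u v
    rw [kn y x j' j, kna y x j' j]
    constructor
    · rintro (⟨h1,h2⟩ | ⟨h1,h2⟩)
      · exact ⟨Or.inl h1, fun hh => (hj2 j' j).mp h2 hh.symm⟩
      · exact ⟨Or.inr h1, fun hh => (hj2 j' j).mp h2 hh.symm⟩
    · rintro ⟨h | h, hjj⟩
      · exact Or.inl ⟨h, (hj2 j' j).mpr (fun hh => hjj hh.symm)⟩
      · exact Or.inr ⟨h, (hj2 j' j).mpr (fun hh => hjj hh.symm)⟩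
  · -- v u
    rw [kn x y j j', kna x y j j']
    constructor
    · rintro (⟨h1,h2⟩ | ⟨h1,h2⟩)
      · exact ⟨Or.inl h1, (hj2 j j').mp h2⟩
      · exact ⟨Or.inr h1, (hj2 j j').mp h2⟩
    · rintro ⟨h | h, hjj⟩
      · exact Or.inl ⟨h, (hj2 j j').mpr hjj⟩
      · exact Or.inr ⟨h, (hj2 j j').mpr hjj⟩
  · -- v v
    rw [add_right_comm (θ (x,j)) ((n : ZMod (2*n))), add_right_comm (θ (y,j')) ((n : ZMod (2*n)))]
    simp only [add_left_inj]
    rw [kr x y j j', kr y x j' j, hInj x y j j']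
    constructor
    · rintro ⟨hne, ⟨h1,h2⟩ | ⟨h1,h2⟩⟩
      · exact ⟨⟨hz _ hr x y h1, Or.inl h1⟩, (hj2 j j').mp h2⟩
      · exact ⟨⟨fun hh => hz _ hr y x h1 hh.symm, Or.inr h1⟩,
          fun hh => (hj2 j' j).mp h2 hh.symm⟩
    · rintro ⟨⟨hii, h | h⟩, hjj⟩
      · exact ⟨fun hh => hjj hh.2, Or.inl ⟨h, (hj2 j j').mpr hjj⟩⟩
      · exact ⟨fun hh => hjj hh.2, Or.inr ⟨h, (hj2 j' j).mpr (fun hh => hjj hh.symm)⟩⟩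
end

section
/- Let d divide n and let φ: Z_n → Z_d be the canonical ring epimorphism. Then the map φ* sending u_{i,j} ↦ u_{φ(i),j} and v_{i,j} ↦ v_{φ(i),j} is a graph homomorphism from CDC(R_n(a,r)) onto CDC(R_d(φ(a), φ(r))), provided φ(a) ≠ 0 and φ(r) ≠ 0 in Z_d. -/
open SimpleGraph

/-- for `d ∣ n`, reduction of indices mod `d` gives a surjective graph
homomorphism `CDC(R_n(a,r)) → CDC(R_d(a mod d, r mod d))`. -/
theorem cdc_quotient_hom (n d a r : ℕ) (hn : 3 ≤ n) (hd : 3 ≤ d) (hdn : d ∣ n)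
    (ha : (a : ZMod d) ≠ 0) (hr : (r : ZMod d) ≠ 0) :
    ∃ f : cdc (roseWindow n a r) →g cdc (roseWindow d a r),
      Function.Surjective f ∧
      (∀ (i : ZMod n) (j : ZMod 2),
        f (Sum.inl i, j) = (Sum.inl (ZMod.castHom hdn (ZMod d) i), j)) ∧
      (∀ (i : ZMod n) (j : ZMod 2),
        f (Sum.inr i, j) = (Sum.inr (ZMod.castHom hdn (ZMod d) i), j)) := by
  haveI : NeZero d := ⟨by omega⟩
  haveI : NeZero n := ⟨by omega⟩
  haveI : Fact (1 < d) := ⟨by omega⟩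
  set φ := ZMod.castHom hdn (ZMod d) with hφ
  have hφsurj : Function.Surjective φ := by
    intro y
    exact ⟨(y.val : ZMod n), by rw [map_natCast, ZMod.natCast_val, ZMod.cast_id]⟩
  have key : ∀ x y, (roseWindow n a r).Adj x y →
      (roseWindow d a r).Adj (Sum.map φ φ x) (Sum.map φ φ y) := by
    intro x y h
    rw [roseWindow, fromRel_adj] at h ⊢
    obtain ⟨hne, hrel⟩ := h
    have h1 : (1 : ZMod d) ≠ 0 := one_ne_zero
    rcases x with i | i <;> rcases y with i' | i' <;>
      simp only [Sum.map_inl, Sum.map_inr, ne_eq, Sum.inl.injEq, Sum.inr.injEq] at *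
    · constructor
      · intro hc
        rcases hrel with h2 | h2 <;> subst h2 <;>
          simp only [map_add, map_one] at hc
        · exact h1 (left_eq_add.mp hc)
        · exact h1 (left_eq_add.mp hc.symm)
      · rcases hrel with h2 | h2
        · subst h2; left; simp [map_add]
        · subst h2; right; simp [map_add]
    · refine ⟨Sum.inl_ne_inr, ?_⟩
      rcases hrel with (h2 | h2) | h2
      · subst h2; exact Or.inl (Or.inl rfl)
      · subst h2; exact Or.inl (Or.inr (by simp [map_add]))
      · exact absurd h2 not_false
    · refine ⟨Sum.inr_ne_inl, ?_⟩
      rcases hrel with h2 | (h2 | h2)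
      · exact absurd h2 not_false
      · subst h2; exact Or.inr (Or.inl rfl)
      · subst h2; exact Or.inr (Or.inr (by simp [map_add]))
    · constructor
      · intro hc
        rcases hrel with h2 | h2 <;> subst h2 <;>
          simp only [map_add, map_natCast] at hc
        · exact hr (left_eq_add.mp hc)
        · exact hr (left_eq_add.mp hc.symm)
      · rcases hrel with h2 | h2
        · subst h2; left; simp [map_add]
        · subst h2; right; simp [map_add]
  refine ⟨⟨fun p => (Sum.map φ φ p.1, p.2), ?_⟩, ?_, fun i j => rfl, fun i j => rfl⟩
  · rintro ⟨x, jx⟩ ⟨y, jy⟩ ⟨hadj, hj⟩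
    exact ⟨key x y hadj, hj⟩
  · rintro ⟨w | w, j⟩
    · obtain ⟨x, hx⟩ := hφsurj w
      exact ⟨(Sum.inl x, j), by subst hx; rfl⟩
    · obtain ⟨x, hx⟩ := hφsurj w
      exact ⟨(Sum.inr x, j), by subst hx; rfl⟩
end
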